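/- arXiv:1401.4560 — 2 statements merged into one kernel-verified Lean document; each statement's English description precedes it below -/
import Mathlib

section
/- (Addition theorem for q-Bernoulli polynomials.) For all x, y ∈ ℂ and every integer n ≥ 0: B_{n,q}(x,y) = Σ_{k=0}^{n} [n choose k]_q b_{k,q} (x ⊕_q y)^{n−k}, and also B_{n,q}(x,y) = Σ_{k=0}^{n} [n choose k]_q ((−1;q)_{n−k}/2^{n−k}) B_{k,q}(x) y^{n−k}. -/
open Finset PowerSeries

/-- The `q`-number `[n]_q = (1 - q^n)/(1 - q)`. -/
noncomputable def qNum (q : ℂ) (n : ℕ) : ℂ := (1 - q ^ n) / (1 - q)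

/-- The `q`-factorial `[n]_q!`. -/
noncomputable def qFact (q : ℂ) : ℕ → ℂ
  | 0 => 1
  | n + 1 => qNum q (n + 1) * qFact q n

/-- The `q`-shifted factorial `(a; q)_n = ∏_{j=0}^{n-1} (1 - q^j a)`. -/
noncomputable def qShift (a q : ℂ) (n : ℕ) : ℂ := ∏ j ∈ Finset.range n, (1 - q ^ j * a)

/-- The Gaussian binomial coefficient `[n choose k]_q = (q;q)_n / ((q;q)_{n-k} (q;q)_k)`. -/
noncomputable def qBinom (q : ℂ) (n k : ℕ) : ℂ :=
  qShift q q n / (qShift q q (n - k) * qShift q q k)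

/-- The formal power series (in `t`) `𝓔_q(tx) = Σ_{n≥0} (-1;q)_n (x)^n t^n / (2^n [n]_q!)`. -/
noncomputable def qExp (q x : ℂ) : PowerSeries ℂ :=
  PowerSeries.mk fun n => qShift (-1) q n * x ^ n / (2 ^ n * qFact q n)

/-- The generating series `Σ_{n≥0} a_n t^n / [n]_q!` of a sequence `a`. -/
noncomputable def qGen (q : ℂ) (a : ℕ → ℂ) : PowerSeries ℂ :=
  PowerSeries.mk fun n => a n / qFact q n

/-- The `q`-addition `(x ⊕_q y)^n`. -/
noncomputable def qAdd (q x y : ℂ) (n : ℕ) : ℂ :=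
  ∑ k ∈ Finset.range (n + 1),
    qBinom q n k * (qShift (-1) q k * qShift (-1) q (n - k) / 2 ^ n) * x ^ k * y ^ (n - k)

section Aux
variable {q : ℂ}

lemma one_sub_qpow_ne (hq1 : ‖q‖ < 1) {n : ℕ} (hn : n ≠ 0) : (1:ℂ) - q ^ n ≠ 0 := by
  rw [sub_ne_zero]
  intro h
  have h2 : ‖q‖ ^ n < 1 := pow_lt_one₀ (norm_nonneg q) hq1 hn
  rw [← norm_pow, ← h, norm_one] at h2
  exact lt_irrefl 1 h2

lemma one_sub_q_ne (hq1 : ‖q‖ < 1) : (1:ℂ) - q ≠ 0 := by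
  have := one_sub_qpow_ne hq1 (n := 1) one_ne_zero
  simpa using this

lemma qNum_ne (hq1 : ‖q‖ < 1) {n : ℕ} (hn : n ≠ 0) : qNum q n ≠ 0 :=
  div_ne_zero (one_sub_qpow_ne hq1 hn) (one_sub_q_ne hq1)

lemma qFact_ne (hq1 : ‖q‖ < 1) (n : ℕ) : qFact q n ≠ 0 := by
  induction n with
  | zero => simp [qFact]
  | succ m ih => exact mul_ne_zero (qNum_ne hq1 (Nat.succ_ne_zero m)) ih

lemma qShift_qq (hq1 : ‖q‖ < 1) (n : ℕ) :
    qShift q q n = (1 - q) ^ n * qFact q n := by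
  induction n with
  | zero => simp [qShift, qFact]
  | succ m ih =>
    rw [qShift, Finset.prod_range_succ, ← qShift, ih]
    have : qFact q (m + 1) = qNum q (m + 1) * qFact q m := rfl
    rw [this, qNum]
    have h1q := one_sub_q_ne hq1
    field_simp
    ring

lemma qBinom_eq (hq1 : ‖q‖ < 1) {n k : ℕ} (h : k ≤ n) :
    qBinom q n k = qFact q n / (qFact q k * qFact q (n - k)) := by
  rw [qBinom, qShift_qq hq1, qShift_qq hq1, qShift_qq hq1]
  have h1q := one_sub_q_ne hq1
  have hp : (1 - q) ^ (n - k) * (1 - q) ^ k = (1 - q) ^ n := by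
    rw [← pow_add, Nat.sub_add_cancel h]
  rw [show (1 - q) ^ (n - k) * qFact q (n - k) * ((1 - q) ^ k * qFact q k)
      = (1 - q) ^ n * (qFact q k * qFact q (n - k)) by rw [← hp]; ring,
    show (1 - q) ^ n * qFact q n = (1 - q) ^ n * qFact q n from rfl,
    mul_div_mul_left _ _ (pow_ne_zero n h1q)]

lemma qExp_zero : qExp q 0 = 1 := by
  ext n
  cases n with
  | zero => simp [qExp, qShift, qFact, PowerSeries.coeff_mk, PowerSeries.coeff_one]
  | succ m => simp [qExp, PowerSeries.coeff_one]

lemma qExp_sub_one_ne (hq1 : ‖q‖ < 1) : qExp q 1 - 1 ≠ 0 := by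
  intro h
  have := congrArg (PowerSeries.coeff 1) h
  rw [map_sub, PowerSeries.coeff_one] at this
  simp only [qExp, PowerSeries.coeff_mk] at this
  have h1 : qFact q 1 = 1 := by
    simp [qFact, qNum, div_self (one_sub_q_ne hq1)]
  have h2 : qShift (-1) q 1 = 2 := by simp [qShift]; ring
  rw [h1, h2] at this
  norm_num at this

lemma coeff_qGen (a : ℕ → ℂ) (n : ℕ) :
    PowerSeries.coeff n (qGen q a) = a n / qFact q n := PowerSeries.coeff_mk n _

lemma coeff_qExp (x : ℂ) (n : ℕ) :
    PowerSeries.coeff n (qExp q x) = qShift (-1) q n * x ^ n / (2 ^ n * qFact q n) :=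
  PowerSeries.coeff_mk n _

end Aux

/-- Addition theorem for the `q`-Bernoulli polynomials `B_{n,q}(x,y)`, defined by
`(t/(𝓔_q(t)-1)) 𝓔_q(tx) 𝓔_q(ty) = Σ_{n≥0} B_{n,q}(x,y) t^n/[n]_q!`, in terms of the
`q`-Bernoulli numbers `b_{n,q}` defined by `t/(𝓔_q(t)-1) = Σ_{n≥0} b_{n,q} t^n/[n]_q!`. -/
theorem qBernoulli_addition (q : ℂ) (hq0 : 0 < ‖q‖) (hq1 : ‖q‖ < 1)
    (b : ℕ → ℂ) (hb : qGen q b * (qExp q 1 - 1) = PowerSeries.X)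
    (B : ℂ → ℂ → ℕ → ℂ)
    (hB : ∀ x y : ℂ, qGen q (B x y) * (qExp q 1 - 1) = PowerSeries.X * qExp q x * qExp q y)
    (x y : ℂ) (n : ℕ) :
    B x y n = ∑ k ∈ Finset.range (n + 1), qBinom q n k * b k * qAdd q x y (n - k) ∧
    B x y n = ∑ k ∈ Finset.range (n + 1),
      qBinom q n k * (qShift (-1) q (n - k) / 2 ^ (n - k)) * B x 0 k * y ^ (n - k) := by
  have hF := qFact_ne hq1
  have hE := qExp_sub_one_ne hq1
  constructor
  · have h1 : qGen q (B x y) = qGen q b * (qExp q x * qExp q y) := by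
      apply mul_right_cancel₀ hE
      rw [hB x y]
      have e1 : qGen q b * (qExp q x * qExp q y) * (qExp q 1 - 1)
          = qGen q b * (qExp q 1 - 1) * qExp q x * qExp q y := by ring
      rw [e1, hb]
    have c1 := congrArg (PowerSeries.coeff n) h1
    rw [PowerSeries.coeff_mul, Finset.Nat.sum_antidiagonal_eq_sum_range_succ_mk] at c1
    simp only [coeff_qGen] at c1
    rw [div_eq_iff (hF n)] at c1
    rw [c1, Finset.sum_mul]
    refine Finset.sum_congr rfl fun k hk => ?_
    have hkn : k ≤ n := Nat.lt_succ_iff.mp (Finset.mem_range.mp hk)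
    rw [PowerSeries.coeff_mul, Finset.Nat.sum_antidiagonal_eq_sum_range_succ_mk]
    simp only [coeff_qExp]
    rw [qAdd, Finset.mul_sum, Finset.sum_mul, Finset.mul_sum]
    refine Finset.sum_congr rfl fun i hi => ?_
    have him : i ≤ n - k := Nat.lt_succ_iff.mp (Finset.mem_range.mp hi)
    rw [qBinom_eq hq1 hkn, qBinom_eq hq1 him]
    have h2m : (2:ℂ) ^ i * 2 ^ (n - k - i) = 2 ^ (n - k) := by
      rw [← pow_add, Nat.add_sub_cancel' him]
    rw [← h2m]
    have hFk := hF k; have hFm := hF (n - k); have hFi := hF i; have hFmi := hF (n - k - i)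
    field_simp
  · have h1 : qGen q (B x y) = qGen q (B x 0) * qExp q y := by
      apply mul_right_cancel₀ hE
      rw [hB x y]
      have e1 : qGen q (B x 0) * qExp q y * (qExp q 1 - 1)
          = qGen q (B x 0) * (qExp q 1 - 1) * qExp q y := by ring
      rw [e1, hB x 0, qExp_zero, mul_one]
    have c1 := congrArg (PowerSeries.coeff n) h1
    rw [PowerSeries.coeff_mul, Finset.Nat.sum_antidiagonal_eq_sum_range_succ_mk] at c1
    simp only [coeff_qGen, coeff_qExp] at c1
    rw [div_eq_iff (hF n)] at c1
    rw [c1, Finset.sum_mul]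
    refine Finset.sum_congr rfl fun k hk => ?_
    have hkn : k ≤ n := Nat.lt_succ_iff.mp (Finset.mem_range.mp hk)
    rw [qBinom_eq hq1 hkn]
    have hFk := hF k; have hFm := hF (n - k)
    field_simp
end

section
/- The odd-indexed q-Bernoulli numbers beyond the first vanish: b_{2r+1,q} = 0 for every integer r ≥ 1. -/
open Finset PowerSeries

/-- Abbreviation for the coefficients of `qExp`. -/
noncomputable def cc (q x : ℂ) (n : ℕ) : ℂ := qShift (-1) q n * x ^ n / (2 ^ n * qFact q n)

/-- Convolution of the coefficients of `qExp q 1` and `qExp q (-1)`. -/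
noncomputable def ff (q : ℂ) (n : ℕ) : ℂ :=
  ∑ k ∈ Finset.range (n + 1), cc q 1 k * cc q (-1) (n - k)

lemma aux_pow_ne_one {q : ℂ} (hq1 : ‖q‖ < 1) {n : ℕ} (hn : 1 ≤ n) : q ^ n ≠ 1 := by
  intro h
  have h2 : ‖q ^ n‖ < 1 := by
    rw [norm_pow]
    exact pow_lt_one₀ (norm_nonneg q) hq1 (by omega)
  rw [h] at h2; simp at h2

lemma aux_one_sub_pow {q : ℂ} (hq1 : ‖q‖ < 1) {n : ℕ} (hn : 1 ≤ n) :
    (1 : ℂ) - q ^ n ≠ 0 :=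
  sub_ne_zero.mpr (Ne.symm (aux_pow_ne_one hq1 hn))

lemma aux_one_sub {q : ℂ} (hq1 : ‖q‖ < 1) : (1 : ℂ) - q ≠ 0 := by
  have := aux_one_sub_pow hq1 (n := 1) le_rfl
  simpa using this

lemma qFact_ne_zero {q : ℂ} (hq1 : ‖q‖ < 1) (n : ℕ) : qFact q n ≠ 0 := by
  induction n with
  | zero => simp [qFact]
  | succ m ih =>
    simp only [qFact]
    exact mul_ne_zero
      (div_ne_zero (aux_one_sub_pow hq1 (by omega)) (aux_one_sub hq1)) ih

lemma crec {q : ℂ} (hq1 : ‖q‖ < 1) (x : ℂ) (n : ℕ) :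
    (1 - q ^ (n + 1)) * cc q x (n + 1) = (1 - q) / 2 * ((1 + q ^ n) * x) * cc q x n := by
  have h1 : qShift (-1) q (n + 1) = (1 + q ^ n) * qShift (-1) q n := by
    unfold qShift
    rw [Finset.prod_range_succ]; ring
  have h2 : qFact q (n + 1) = (1 - q ^ (n + 1)) / (1 - q) * qFact q n := by
    simp [qFact, qNum]
  have hf : qFact q n ≠ 0 := qFact_ne_zero hq1 n
  have hq' : (1 : ℂ) - q ≠ 0 := aux_one_sub hq1
  have hqn' : (1 : ℂ) - q ^ (n + 1) ≠ 0 := aux_one_sub_pow hq1 (by omega)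
  unfold cc
  rw [h1, h2]
  field_simp
  ring

lemma ff_rec {q : ℂ} (hq1 : ‖q‖ < 1) (n : ℕ) :
    (1 - q ^ (n + 1)) * ff q (n + 1) = (1 - q) / 2 * (1 - q ^ n) * ff q n := by
  have key : ∀ k ∈ Finset.range (n + 1),
      (1 - q ^ (k + 1)) * (cc q 1 (k + 1) * cc q (-1) (n - k))
        + cc q 1 k * (q ^ k * ((1 - q ^ (n + 1 - k)) * cc q (-1) (n + 1 - k)))
      = (1 - q) / 2 * (1 - q ^ n) * (cc q 1 k * cc q (-1) (n - k)) := by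
    intro k hk
    have hk' : k ≤ n := Nat.lt_succ_iff.mp (Finset.mem_range.mp hk)
    have h1 : n + 1 - k = (n - k) + 1 := by omega
    rw [h1, ← mul_assoc, crec hq1, crec hq1]
    have h2 : q ^ k * q ^ (n - k) = q ^ n := by
      rw [← pow_add]; congr 1; omega
    linear_combination (-(1 - q) / 2 * cc q 1 k * cc q (-1) (n - k)) * h2
  calc (1 - q ^ (n + 1)) * ff q (n + 1)
      = ∑ k ∈ Finset.range (n + 2),
          ((1 - q ^ k) * (cc q 1 k * cc q (-1) (n + 1 - k))
            + cc q 1 k * (q ^ k * ((1 - q ^ (n + 1 - k)) * cc q (-1) (n + 1 - k)))) := by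
        rw [ff, Finset.mul_sum]
        refine Finset.sum_congr rfl fun k hk => ?_
        have hk' : k ≤ n + 1 := Nat.lt_succ_iff.mp (Finset.mem_range.mp hk)
        have h2 : q ^ k * q ^ (n + 1 - k) = q ^ (n + 1) := by
          rw [← pow_add]; congr 1; omega
        linear_combination (cc q 1 k * cc q (-1) (n + 1 - k)) * h2
    _ = (∑ k ∈ Finset.range (n + 2), (1 - q ^ k) * (cc q 1 k * cc q (-1) (n + 1 - k)))
        + ∑ k ∈ Finset.range (n + 2),
            cc q 1 k * (q ^ k * ((1 - q ^ (n + 1 - k)) * cc q (-1) (n + 1 - k))) :=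
        Finset.sum_add_distrib
    _ = (∑ k ∈ Finset.range (n + 1), (1 - q ^ (k + 1)) * (cc q 1 (k + 1) * cc q (-1) (n - k)))
        + ∑ k ∈ Finset.range (n + 1),
            cc q 1 k * (q ^ k * ((1 - q ^ (n + 1 - k)) * cc q (-1) (n + 1 - k))) := by
        rw [Finset.sum_range_succ'
            (fun k => (1 - q ^ k) * (cc q 1 k * cc q (-1) (n + 1 - k))) (n + 1),
          Finset.sum_range_succ
            (fun k => cc q 1 k * (q ^ k * ((1 - q ^ (n + 1 - k)) * cc q (-1) (n + 1 - k)))) (n + 1)]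
        simp
    _ = ∑ k ∈ Finset.range (n + 1),
          ((1 - q ^ (k + 1)) * (cc q 1 (k + 1) * cc q (-1) (n - k))
            + cc q 1 k * (q ^ k * ((1 - q ^ (n + 1 - k)) * cc q (-1) (n + 1 - k)))) :=
        Finset.sum_add_distrib.symm
    _ = ∑ k ∈ Finset.range (n + 1),
          (1 - q) / 2 * (1 - q ^ n) * (cc q 1 k * cc q (-1) (n - k)) :=
        Finset.sum_congr rfl key
    _ = (1 - q) / 2 * (1 - q ^ n) * ff q n := by rw [ff, Finset.mul_sum]

lemma ff_eq_zero {q : ℂ} (hq1 : ‖q‖ < 1) {n : ℕ} (hn : 1 ≤ n) : ff q n = 0 := by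
  induction n with
  | zero => omega
  | succ m ih =>
    have h := ff_rec hq1 m
    have hRHS : (1 - q) / 2 * (1 - q ^ m) * ff q m = 0 := by
      rcases Nat.eq_zero_or_pos m with hm | hm
      · subst hm; simp
      · rw [ih hm]; ring
    rw [hRHS] at h
    have hne : (1 : ℂ) - q ^ (m + 1) ≠ 0 := aux_one_sub_pow hq1 (by omega)
    exact (mul_eq_zero.mp h).resolve_left hne

lemma coeff_qExp_s7 (q x : ℂ) (n : ℕ) : PowerSeries.coeff n (qExp q x) = cc q x n := by
  simp [qExp, cc, PowerSeries.coeff_mk]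

lemma qExp_mul_qExp_neg {q : ℂ} (hq1 : ‖q‖ < 1) :
    qExp q 1 * qExp q (-1) = 1 := by
  ext n
  rw [PowerSeries.coeff_mul, Finset.Nat.sum_antidiagonal_eq_sum_range_succ_mk]
  simp only [coeff_qExp_s7]
  cases n with
  | zero => simp [cc, qShift, qFact]
  | succ m =>
    have h : ff q (m + 1) = 0 := ff_eq_zero hq1 (by omega)
    rw [ff] at h
    rw [h]
    simp [PowerSeries.coeff_one]

lemma rescale_qExp (q : ℂ) : PowerSeries.rescale (-1) (qExp q 1) = qExp q (-1) := by
  ext n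
  rw [PowerSeries.coeff_rescale, coeff_qExp_s7, coeff_qExp_s7]
  unfold cc
  ring

lemma rescale_X_neg : PowerSeries.rescale (-1 : ℂ) PowerSeries.X = -PowerSeries.X := by
  ext n
  rw [map_neg, PowerSeries.coeff_rescale, PowerSeries.coeff_X]
  split_ifs with h
  · subst h; simp
  · simp

/-- The odd-indexed `q`-Bernoulli numbers beyond the first vanish: `b_{2r+1,q} = 0` for `r ≥ 1`,
where the `q`-Bernoulli numbers are defined by `t/(𝓔_q(t)-1) = Σ_{n≥0} b_{n,q} t^n/[n]_q!`. -/
theorem qBernoulli_odd_eq_zero (q : ℂ) (hq0 : 0 < ‖q‖) (hq1 : ‖q‖ < 1)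
    (b : ℕ → ℂ) (hb : qGen q b * (qExp q 1 - 1) = PowerSeries.X)
    (r : ℕ) (hr : 1 ≤ r) :
    b (2 * r + 1) = 0 := by
  set E := qExp q 1 with hE
  set B := qGen q b with hB
  set B' := PowerSeries.rescale (-1) (qGen q b) with hB'
  have hEE : E * qExp q (-1) = 1 := qExp_mul_qExp_neg hq1
  have hres : B' * (qExp q (-1) - 1) = -PowerSeries.X := by
    have := congrArg (PowerSeries.rescale (-1)) hb
    rw [map_mul, map_sub, map_one, rescale_qExp, rescale_X_neg] at this
    exact this
  have h3 : (qExp q (-1) - 1) * E = 1 - E := by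
    rw [sub_mul, one_mul, mul_comm, hEE]
  have h2 : B' * (E - 1) = PowerSeries.X * E := by
    calc B' * (E - 1) = -(B' * ((qExp q (-1) - 1) * E)) := by rw [h3]; ring
      _ = -(B' * (qExp q (-1) - 1) * E) := by ring
      _ = -(-PowerSeries.X * E) := by rw [hres]
      _ = PowerSeries.X * E := by ring
  have h4 : (B' - B) * (E - 1) = PowerSeries.X * (E - 1) := by
    rw [sub_mul, h2, hb]; ring
  have hEne : E - 1 ≠ 0 := by
    intro h
    have h1 := congrArg (PowerSeries.coeff 1) h
    rw [map_sub, hE, coeff_qExp_s7] at h1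
    have hfact : qFact q 1 = 1 := by
      simp [qFact, qNum, div_self (aux_one_sub hq1)]
    simp [cc, qShift, hfact, PowerSeries.coeff_one] at h1
  have h5 : B' - B = PowerSeries.X := mul_right_cancel₀ hEne h4
  have h6 := congrArg (PowerSeries.coeff (2 * r + 1)) h5
  rw [map_sub, hB', hB, PowerSeries.coeff_rescale, PowerSeries.coeff_X] at h6
  simp only [qGen, PowerSeries.coeff_mk] at h6
  have hodd : (-1 : ℂ) ^ (2 * r + 1) = -1 := Odd.neg_one_pow ⟨r, by ring⟩
  have hif : (if 2 * r + 1 = 1 then (1 : ℂ) else 0) = 0 := by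
    rw [if_neg]; omega
  rw [hodd, hif] at h6
  have h7 : b (2 * r + 1) / qFact q (2 * r + 1) = 0 := by linear_combination -h6 / 2
  rcases div_eq_zero_iff.mp h7 with h | h
  · exact h
  · exact absurd h (qFact_ne_zero hq1 _)
end
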